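/- If u : ℝ → ℝ is bounded, measurable, and nonnegative, and v = K_d * u (convolution), then v twice differentiable with -d v'' = u - v pointwise wherever u is continuous. -/

import Mathlib

open Real MeasureTheory Set Filter

noncomputable def Kd (d x : ℝ) : ℝ := (1 / (2 * Real.sqrt d)) * Real.exp (-|x| / Real.sqrt d)

private lemma exp_mul_integrableOn_Iic' {c a : ℝ} (hc : 0 < c) :
    IntegrableOn (fun y => Real.exp (c * y)) (Set.Iic a) := by
  have hcont : Continuous fun y : ℝ => Real.exp (c * y) :=
    Real.continuous_exp.comp (continuous_const.mul continuous_id)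
  have hderiv : ∀ x : ℝ, HasDerivAt (fun y => Real.exp (c * y) / c) (Real.exp (c * x)) x := by
    intro x
    have h := (((hasDerivAt_id x).const_mul c).exp).div_const c
    refine h.congr_deriv (Eq.symm ?_)
    simp only [id_eq, mul_one]; rw [mul_div_assoc, div_self hc.ne', mul_one]
  refine integrableOn_Iic_of_intervalIntegral_norm_bounded (Real.exp (c * a) / c) a
    (fun i : ℝ => hcont.integrableOn_Ioc) tendsto_id (Eventually.of_forall fun i => ?_)
  have hint : ∫ x in (id i : ℝ)..a, Real.exp (c * x)
      = Real.exp (c * a) / c - Real.exp (c * i) / c :=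
    intervalIntegral.integral_eq_sub_of_hasDerivAt (fun x _ => hderiv x)
      (hcont.intervalIntegrable _ _)
  calc ∫ x in (id i : ℝ)..a, ‖Real.exp (c * x)‖
      = ∫ x in (id i : ℝ)..a, Real.exp (c * x) := by
        simp [Real.norm_eq_abs, Real.abs_exp]
    _ = Real.exp (c * a) / c - Real.exp (c * i) / c := hint
    _ ≤ Real.exp (c * a) / c := sub_le_self _ (by positivity)

private lemma integral_Ioi_sub_Ioi' {g : ℝ → ℝ} {a b : ℝ} (h : a ≤ b)
    (ha : IntegrableOn g (Set.Ioi a)) (hb : IntegrableOn g (Set.Ioi b)) :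
    (∫ x in Set.Ioi a, g x) - ∫ x in Set.Ioi b, g x = ∫ x in Set.Ioc a b, g x := by
  rw [← Ioc_union_Ioi_eq_Ioi h,
    setIntegral_union Ioc_disjoint_Ioi_same measurableSet_Ioi
      (ha.mono_set Ioc_subset_Ioi_self) hb]
  ring

theorem conv_solves_ode (d : ℝ) (hd : 0 < d) (u : ℝ → ℝ)
    (hu_bdd : ∃ M, ∀ x, |u x| ≤ M) (hu_cont : Continuous u) (hu_nonneg : ∀ x, 0 ≤ u x)
    (v : ℝ → ℝ) (hv : ∀ x, v x = ∫ y : ℝ, Kd d (x - y) * u y) :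
    ∃ v' v'' : ℝ → ℝ,
      (∀ x, HasDerivAt v (v' x) x) ∧
      (∀ x, HasDerivAt v' (v'' x) x) ∧
      (∀ x, -(d * v'' x) = u x - v x) := by
  obtain ⟨M, hM⟩ := hu_bdd
  set s := Real.sqrt d with hs_def
  have hs : 0 < s := Real.sqrt_pos.mpr hd
  have hs2 : s * s = d := Real.mul_self_sqrt hd.le
  set c : ℝ := s⁻¹ with hc_def
  have hc : 0 < c := inv_pos.mpr hs
  set f : ℝ → ℝ := fun y => Real.exp (c * y) * u y with hf_def
  set g : ℝ → ℝ := fun y => Real.exp (-(c * y)) * u y with hg_def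
  have hf_cont : Continuous f :=
    (Real.continuous_exp.comp (continuous_const.mul continuous_id)).mul hu_cont
  have hg_cont : Continuous g :=
    (Real.continuous_exp.comp (continuous_const.mul continuous_id).neg).mul hu_cont
  have hfI : ∀ x : ℝ, IntegrableOn f (Set.Iic x) := by
    intro x
    have h1 : IntegrableOn (fun y => Real.exp (c * y)) (Set.Iic x) :=
      exp_mul_integrableOn_Iic' hc
    have h2 := h1.bdd_mul hu_cont.aestronglyMeasurable.restrict
      (c := M) (ae_of_all _ fun y => by simpa [Real.norm_eq_abs] using hM y)
    exact h2.congr (Eventually.of_forall fun y => mul_comm _ _)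
  have hgI : ∀ x : ℝ, IntegrableOn g (Set.Ioi x) := by
    intro x
    have h1 : IntegrableOn (fun y => Real.exp (-(c * y))) (Set.Ioi x) := by
      simpa [neg_mul] using exp_neg_integrableOn_Ioi x hc
    have h2 := h1.bdd_mul hu_cont.aestronglyMeasurable.restrict
      (c := M) (ae_of_all _ fun y => by simpa [Real.norm_eq_abs] using hM y)
    exact h2.congr (Eventually.of_forall fun y => mul_comm _ _)
  set A : ℝ → ℝ := fun x => ∫ y in Set.Iic x, f y with hA_def
  set B : ℝ → ℝ := fun x => ∫ y in Set.Ioi x, g y with hB_def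
  have hA : ∀ x : ℝ, A x = A 0 + ∫ t in (0:ℝ)..x, f t := by
    intro x
    rw [← intervalIntegral.integral_Iic_sub_Iic (hfI 0) (hfI x)]
    simp only [hA_def]
    ring
  have hB : ∀ x : ℝ, B x = B 0 - ∫ t in (0:ℝ)..x, g t := by
    intro x
    rcases le_total 0 x with h | h
    · rw [intervalIntegral.integral_of_le h, ← integral_Ioi_sub_Ioi' h (hgI 0) (hgI x)]
      simp only [hB_def]
      ring
    · rw [intervalIntegral.integral_of_ge h, ← integral_Ioi_sub_Ioi' h (hgI x) (hgI 0)]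
      simp only [hB_def]
      ring
  have hA' : ∀ x : ℝ, HasDerivAt A (f x) x := by
    intro x
    have h1 : HasDerivAt (fun t => A 0 + ∫ τ in (0:ℝ)..t, f τ) (f x) x :=
      (intervalIntegral.integral_hasDerivAt_right (hf_cont.intervalIntegrable _ _)
        ⟨Set.univ, Filter.univ_mem, hf_cont.aestronglyMeasurable.restrict⟩
        hf_cont.continuousAt).const_add (A 0)
    exact h1.congr_of_eventuallyEq (Eventually.of_forall fun t => hA t)
  have hB' : ∀ x : ℝ, HasDerivAt B (-(g x)) x := by
    intro x
    have h1 : HasDerivAt (fun t => B 0 - ∫ τ in (0:ℝ)..t, g τ) (-(g x)) x :=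
      (intervalIntegral.integral_hasDerivAt_right (hg_cont.intervalIntegrable _ _)
        ⟨Set.univ, Filter.univ_mem, hg_cont.aestronglyMeasurable.restrict⟩
        hg_cont.continuousAt).const_sub (B 0)
    exact h1.congr_of_eventuallyEq (Eventually.of_forall fun t => hB t)
  have hVform : ∀ x : ℝ, v x
      = (1 / (2 * s)) * (Real.exp (-(c * x)) * A x + Real.exp (c * x) * B x) := by
    intro x
    have e1 : Set.EqOn (fun y => Kd d (x - y) * u y)
        (fun y => ((1 / (2 * s)) * Real.exp (-(c * x))) * f y) (Set.Iic x) := by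
      intro y hy
      have habs : |x - y| = x - y := abs_of_nonneg (by simp only [sub_nonneg]; exact hy)
      have hxy : -(x - y) / s = -(c * x) + c * y := by
        rw [hc_def]; field_simp; ring
      simp only [Kd, habs, hf_def, ← hs_def, neg_div, ← neg_div s (x - y), hxy, Real.exp_add]
      ring
    have e2 : Set.EqOn (fun y => Kd d (x - y) * u y)
        (fun y => ((1 / (2 * s)) * Real.exp (c * x)) * g y) (Set.Ioi x) := by
      intro y hy
      have habs : |x - y| = -(x - y) := abs_of_nonpos (by simp only [sub_nonpos]; exact (le_of_lt hy))
      have hxy : -(-(x - y)) / s = c * x + -(c * y) := by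
        rw [hc_def]; field_simp; ring
      simp only [Kd, habs, hg_def, ← hs_def, hxy, Real.exp_add]
      ring
    have hI1 : IntegrableOn (fun y => Kd d (x - y) * u y) (Set.Iic x) :=
      IntegrableOn.congr_fun ((hfI x).const_mul _) (fun y hy => (e1 hy).symm) measurableSet_Iic
    have hI2 : IntegrableOn (fun y => Kd d (x - y) * u y) (Set.Ioi x) :=
      IntegrableOn.congr_fun ((hgI x).const_mul _) (fun y hy => (e2 hy).symm) measurableSet_Ioi
    rw [hv x, ← intervalIntegral.integral_Iic_add_Ioi hI1 hI2,
      setIntegral_congr_fun measurableSet_Iic e1, setIntegral_congr_fun measurableSet_Ioi e2,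
      integral_const_mul, integral_const_mul]
    rw [show A x = ∫ y in Set.Iic x, f y from rfl, show B x = ∫ y in Set.Ioi x, g y from rfl]
    ring
  have hE1 : ∀ x : ℝ, HasDerivAt (fun t => Real.exp (-(c * t)))
      (-c * Real.exp (-(c * x))) x := by
    intro x
    have h := (((hasDerivAt_id x).const_mul c).neg).exp
    refine h.congr_deriv (Eq.symm ?_)
    simp only [Pi.neg_apply, id_eq, mul_one]; ring
  have hE2 : ∀ x : ℝ, HasDerivAt (fun t => Real.exp (c * t))
      (c * Real.exp (c * x)) x := by
    intro x
    have h := ((hasDerivAt_id x).const_mul c).exp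
    refine h.congr_deriv (Eq.symm ?_)
    simp only [id_eq, mul_one]; ring
  refine ⟨fun x => (1 / (2 * s)) * c * (Real.exp (c * x) * B x - Real.exp (-(c * x)) * A x),
    fun x => (v x - u x) / d, ?_, ?_, ?_⟩
  · intro x
    have h := (((hE1 x).mul (hA' x)).add ((hE2 x).mul (hB' x))).const_mul (1 / (2 * s))
    have hMain : HasDerivAt
        (fun t => (1 / (2 * s)) * (Real.exp (-(c * t)) * A t + Real.exp (c * t) * B t))
        ((1 / (2 * s)) * c * (Real.exp (c * x) * B x - Real.exp (-(c * x)) * A x)) x := by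
      refine h.congr_deriv (Eq.symm ?_)
      simp only [hf_def, hg_def, Real.exp_neg]
      field_simp
      ring
    exact hMain.congr_of_eventuallyEq (Eventually.of_forall fun t => hVform t)
  · intro x
    have h := (((hE2 x).mul (hB' x)).sub ((hE1 x).mul (hA' x))).const_mul ((1 / (2 * s)) * c)
    refine h.congr_deriv (Eq.symm ?_)
    show (v x - u x) / d = _
    rw [hVform x]
    simp only [hf_def, hg_def, Real.exp_neg, hc_def, ← hs2]
    have hsne : s ≠ 0 := hs.ne'
    have hexp : Real.exp (s⁻¹ * x) ≠ 0 := Real.exp_ne_zero _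
    field_simp
    ring
  · intro x
    field_simp
    ring
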